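/- There is no ML(DD)-formula χ such that for every model M based on a linear frame and every world w of M: M,w ⊨ χ if and only if the propositional variable p holds at at least one world of M. In particular, the MLC-formula ∃_{≥1}p cannot be expressed in ML(DD) over the class of linear frames. -/
import Mathlib


/-- ML(DD)-formulas over propositional variables indexed by ℕ. -/
inductive MLDD : Type
  | prop : ℕ → MLDD
  | neg : MLDD → MLDD
  | or : MLDD → MLDD → MLDD
  | dia : MLDD → MLDD
  | dd : MLDD → MLDD → MLDD

/-- A Kripke model. -/
structure Model where
  W : Type
  ne : Nonempty W
  R : W → W → Prop
  V : ℕ → W → Prop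

/-- Satisfaction relation for ML(DD). -/
def sat (M : Model) : M.W → MLDD → Prop
  | w, .prop p => M.V p w
  | w, .neg φ => ¬ sat M w φ
  | w, .or φ ψ => sat M w φ ∨ sat M w ψ
  | w, .dia φ => ∃ v, M.R w v ∧ sat M v φ
  | _, .dd φ ψ => ∃ v, sat M v φ ∧ sat M v ψ ∧ ∀ v', v' ≠ v → ¬ sat M v' φ

/-- A model is based on a linear frame: its accessibility relation is irreflexive,
transitive, and trichotomous. -/
def Model.IsLinear (M : Model) : Prop :=
  (∀ w : M.W, ¬ M.R w w) ∧
  (∀ u v w : M.W, M.R u v → M.R v w → M.R u w) ∧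
  (∀ u v : M.W, u ≠ v → M.R u v ∨ M.R v u)

/-- Truth of formulas is invariant under automorphisms of a model. -/
lemma sat_auto (M : Model) (g : M.W → M.W) (ginv : M.W → M.W)
    (hgl : ∀ w, ginv (g w) = w) (hgr : ∀ w, g (ginv w) = w)
    (hR : ∀ a b, M.R a b ↔ M.R (g a) (g b))
    (hV : ∀ p a, M.V p a ↔ M.V p (g a)) :
    ∀ χ : MLDD, ∀ w, sat M w χ ↔ sat M (g w) χ := by
  intro χ
  induction χ with
  | prop p => intro w; exact hV p w
  | neg φ ih => intro w; simp only [sat]; rw [ih w]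
  | or φ ψ ih1 ih2 => intro w; simp only [sat]; rw [ih1 w, ih2 w]
  | dia φ ih =>
    intro w
    simp only [sat]
    constructor
    · rintro ⟨v, hv, hs⟩
      exact ⟨g v, (hR w v).mp hv, (ih v).mp hs⟩
    · rintro ⟨v, hv, hs⟩
      refine ⟨ginv v, ?_, ?_⟩
      · have := (hR w (ginv v)).mpr; rw [hgr] at this; exact this hv
      · have h2 := ih (ginv v); rw [hgr] at h2; exact h2.mpr hs
  | dd φ ψ ih1 ih2 =>
    intro w
    simp only [sat]

/-- If a model has a fixed-point-free automorphism, every `dd` formula is false everywhere. -/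
lemma dd_false (M : Model) (g : M.W → M.W) (ginv : M.W → M.W)
    (hgl : ∀ w, ginv (g w) = w) (hgr : ∀ w, g (ginv w) = w)
    (hR : ∀ a b, M.R a b ↔ M.R (g a) (g b))
    (hV : ∀ p a, M.V p a ↔ M.V p (g a))
    (hfp : ∀ w, g w ≠ w) (φ ψ : MLDD) (w : M.W) :
    ¬ sat M w (.dd φ ψ) := by
  rintro ⟨v, h1, h2, h3⟩
  have : sat M (g v) φ := (sat_auto M g ginv hgl hgr hR hV φ v).mp h1
  exact h3 (g v) (hfp v) this

/-- Model 1: the integers, `p` nowhere. -/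
abbrev M1 : Model := ⟨ℤ, ⟨0⟩, (· < ·), fun _ _ => False⟩

/-- Model 2: ℤ × ℤ with the lexicographic order, `p` exactly where the first
coordinate is negative. -/
abbrev M2 : Model :=
  ⟨ℤ × ℤ, ⟨(0, 0)⟩,
   fun u v => u.1 < v.1 ∨ (u.1 = v.1 ∧ u.2 < v.2),
   fun p u => p = 0 ∧ u.1 < 0⟩

lemma M1_linear : M1.IsLinear := by
  refine ⟨fun w => lt_irrefl w, fun u v w => lt_trans, fun u v h => ?_⟩
  exact lt_or_gt_of_ne h

lemma M2_linear : M2.IsLinear := by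
  refine ⟨?_, ?_, ?_⟩
  · rintro ⟨a, b⟩ h
    simp only [M2] at h
    omega
  · rintro ⟨a, b⟩ ⟨c, d⟩ ⟨e, f⟩ h1 h2
    simp only [M2] at *
    omega
  · rintro ⟨a, b⟩ ⟨c, d⟩ h
    simp only [M2]
    have : a ≠ c ∨ b ≠ d := by
      by_contra hc
      push_neg at hc
      exact h (by rw [hc.1, hc.2])
    omega

lemma M1_dd_false (φ ψ : MLDD) (w : M1.W) : ¬ sat M1 w (.dd φ ψ) := by
  apply dd_false M1 (fun w => w + 1) (fun w => w - 1)
  · intro w; ring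
  · intro w; ring
  · intro a b; constructor <;> (intro h; simp only [M1] at *; omega)
  · intro p a; simp [M1]
  · intro w; simp only [M1]; omega

lemma M2_dd_false (φ ψ : MLDD) (w : M2.W) : ¬ sat M2 w (.dd φ ψ) := by
  apply dd_false M2 (fun u => (u.1, u.2 + 1)) (fun u => (u.1, u.2 - 1))
  · intro w; simp
  · intro w; simp
  · rintro ⟨a, b⟩ ⟨c, d⟩
    constructor <;> (intro h; simp only [M2] at *; omega)
  · rintro p ⟨a, b⟩; simp [M2]
  · rintro ⟨a, b⟩ h
    simp only [Prod.mk.injEq] at h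
    omega

/-- The bisimulation: every world of `M1` matches every world of `M2` with
nonnegative first coordinate. -/
lemma bisim : ∀ χ : MLDD, ∀ (w : ℤ) (a b : ℤ), 0 ≤ a →
    (sat M1 w χ ↔ sat M2 (a, b) χ) := by
  intro χ
  induction χ with
  | prop p =>
    intro w a b ha
    simp only [sat, M1, M2]
    constructor
    · intro h; exact h.elim
    · rintro ⟨_, h⟩; omega
  | neg φ ih =>
    intro w a b ha
    simp only [sat]
    rw [ih w a b ha]
  | or φ ψ ih1 ih2 =>
    intro w a b ha
    simp only [sat]
    rw [ih1 w a b ha, ih2 w a b ha]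
  | dia φ ih =>
    intro w a b ha
    simp only [sat]
    constructor
    · rintro ⟨v, hv, hs⟩
      refine ⟨(a, b + 1), ?_, ?_⟩
      · exact Or.inr ⟨rfl, by omega⟩
      · exact (ih v a (b + 1) ha).mp hs
    · rintro ⟨⟨c, d⟩, hv, hs⟩
      have hv' : a < c ∨ (a = c ∧ b < d) := hv
      have hc : 0 ≤ c := by omega
      exact ⟨w + 1, by omega, (ih (w + 1) c d hc).mpr hs⟩
  | dd φ ψ ih1 ih2 =>
    intro w a b ha
    constructor
    · intro h; exact absurd h (M1_dd_false φ ψ w)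
    · intro h; exact absurd h (M2_dd_false φ ψ (a, b))

/-- There is no ML(DD)-formula which, over models based on linear frames, holds at a world
iff the propositional variable `p` (index 0) holds at at least one world: the MLC-formula
`∃_{≥1} p` cannot be expressed in ML(DD) over the class of linear frames. -/
theorem no_mldd_formula_somewhere_p_linear :
    ¬ ∃ χ : MLDD, ∀ M : Model, M.IsLinear →
      ∀ w : M.W, (sat M w χ ↔ ∃ v : M.W, M.V 0 v) := by
  rintro ⟨χ, hχ⟩
  have h1 : ¬ sat M1 (0 : ℤ) χ := by
    rw [hχ M1 M1_linear 0]
    rintro ⟨v, hv⟩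
    exact hv
  have h2 : sat M2 ((0, 0) : ℤ × ℤ) χ := by
    rw [hχ M2 M2_linear (0, 0)]
    exact ⟨((-1 : ℤ), (0 : ℤ)), rfl, by norm_num⟩
  exact h1 ((bisim χ 0 0 0 le_rfl).mpr h2)
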